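/- Let N ≥ 1 be an integer and R > 0, and define E : [0, R] → ℝ by E(a) = −(ω_{N−1}/2) · (2(N+2) R^N a^{N+4} − (N+4) a^{2(N+2)}) / (N³ (N+2)² (N+4) R^N). Then for every a ∈ (0, R), E is differentiable at a with E′(a) = −ω_{N−1} · (R^N − a^N) a^{N+3} / (N³ (N+2) R^N) < 0; consequently E is strictly decreasing on [0, R]. -/

import Mathlib

open MeasureTheory Real

/-- The Laplacian of `f : ℝ^N → ℝ`: the sum of the second partial derivatives
`∑ i, ∂²f/∂xᵢ²` (the trace of the Hessian). -/
noncomputable def laplacian {N : ℕ} (f : EuclideanSpace ℝ (Fin N) → ℝ)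
    (x : EuclideanSpace ℝ (Fin N)) : ℝ :=
  ∑ i : Fin N, fderiv ℝ (fun y => fderiv ℝ f y (EuclideanSpace.single i 1)) x
    (EuclideanSpace.single i 1)
/-- The explicit Euclidean two-ball auxiliary energy
`E(a) = −(ω/2)(2(N+2)R^N a^{N+4} − (N+4)a^{2(N+2)})/(N³(N+2)²(N+4)R^N)`
(where `ω = ω_{N−1} = N · volume(unit ball)`) has derivative
`E′(a) = −ω(R^N − a^N)a^{N+3}/(N³(N+2)R^N) < 0` for `a ∈ (0,R)`, and hence is
strictly decreasing on `[0,R]`. -/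
theorem stmt_5 (N : ℕ) (hN : 1 ≤ N) (R : ℝ) (hR : 0 < R)
    (ω : ℝ) (hω : ω = (N : ℝ) * (volume (Metric.ball (0 : EuclideanSpace ℝ (Fin N)) 1)).toReal)
    (E : ℝ → ℝ)
    (hE : ∀ a, E a = -(ω/2) * (2*((N:ℝ)+2)*R^N*a^(N+4) - ((N:ℝ)+4)*a^(2*(N+2))) /
        ((N:ℝ)^3 * ((N:ℝ)+2)^2 * ((N:ℝ)+4) * R^N)) :
    (∀ a ∈ Set.Ioo (0:ℝ) R,
        HasDerivAt E (-(ω * (R^N - a^N) * a^(N+3)) / ((N:ℝ)^3 * ((N:ℝ)+2) * R^N)) a ∧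
        -(ω * (R^N - a^N) * a^(N+3)) / ((N:ℝ)^3 * ((N:ℝ)+2) * R^N) < 0) ∧
    StrictAntiOn E (Set.Icc 0 R) := by
  have hNpos : (0:ℝ) < N := by exact_mod_cast hN
  have hRN : (0:ℝ) < R^N := pow_pos hR N
  have hωpos : 0 < ω := by
    rw [hω]
    apply mul_pos hNpos
    apply ENNReal.toReal_pos
    · exact (Metric.measure_ball_pos volume 0 one_pos).ne'
    · exact (measure_ball_lt_top).ne
  have key : ∀ a ∈ Set.Ioo (0:ℝ) R,
      HasDerivAt E (-(ω * (R^N - a^N) * a^(N+3)) / ((N:ℝ)^3 * ((N:ℝ)+2) * R^N)) a := by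
    intro a ha
    have h1 : HasDerivAt (fun x : ℝ =>
        -(ω/2) * (2*((N:ℝ)+2)*R^N*x^(N+4) - ((N:ℝ)+4)*x^(2*(N+2))) /
        ((N:ℝ)^3 * ((N:ℝ)+2)^2 * ((N:ℝ)+4) * R^N))
        ((-(ω/2) * (2*((N:ℝ)+2)*R^N*((N+4 : ℕ):ℝ)*a^(N+3) -
          ((N:ℝ)+4)*((2*(N+2) : ℕ):ℝ)*a^(2*(N+2)-1))) /
        ((N:ℝ)^3 * ((N:ℝ)+2)^2 * ((N:ℝ)+4) * R^N)) a := by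
      have hp1 := (hasDerivAt_pow (N+4) a)
      have hp2 := (hasDerivAt_pow (2*(N+2)) a)
      have := ((hp1.const_mul (2*((N:ℝ)+2)*R^N)).sub (hp2.const_mul ((N:ℝ)+4))).const_mul (-(ω/2))
      have := this.div_const ((N:ℝ)^3 * ((N:ℝ)+2)^2 * ((N:ℝ)+4) * R^N)
      convert this using 1
      push_cast
      rfl
      rfl
      rfl
      rw [show N + 4 - 1 = N + 3 by omega]
      ring
    have heq : (fun x : ℝ =>
        -(ω/2) * (2*((N:ℝ)+2)*R^N*x^(N+4) - ((N:ℝ)+4)*x^(2*(N+2))) /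
        ((N:ℝ)^3 * ((N:ℝ)+2)^2 * ((N:ℝ)+4) * R^N)) = E := by
      funext x; rw [hE x]
    rw [heq] at h1
    convert h1 using 1
    have h2 : 2*(N+2)-1 = 2*N+3 := by omega
    have h3 : N+4-1 = N+3 := by omega
    rw [h2]
    have hN2 : ((N:ℝ)+2) ≠ 0 := by positivity
    have hN4 : ((N:ℝ)+4) ≠ 0 := by positivity
    have hN0 : (N:ℝ) ≠ 0 := hNpos.ne'
    field_simp
    push_cast
    ring_nf
  have neg : ∀ a ∈ Set.Ioo (0:ℝ) R,
      -(ω * (R^N - a^N) * a^(N+3)) / ((N:ℝ)^3 * ((N:ℝ)+2) * R^N) < 0 := by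
    intro a ha
    obtain ⟨ha0, haR⟩ := ha
    apply div_neg_of_neg_of_pos
    · have : 0 < ω * (R^N - a^N) * a^(N+3) := by
        apply mul_pos (mul_pos hωpos _) (pow_pos ha0 _)
        nlinarith [pow_lt_pow_left₀ haR ha0.le (by omega : N ≠ 0)]
      linarith
    · positivity
  refine ⟨fun a ha => ⟨key a ha, neg a ha⟩, ?_⟩
  apply StrictAntiOn.mono ?_ (le_refl _)
  apply strictAntiOn_of_deriv_neg (convex_Icc 0 R)
  · have : Continuous E := by
      have : E = fun x : ℝ =>
        -(ω/2) * (2*((N:ℝ)+2)*R^N*x^(N+4) - ((N:ℝ)+4)*x^(2*(N+2))) /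
        ((N:ℝ)^3 * ((N:ℝ)+2)^2 * ((N:ℝ)+4) * R^N) := by funext x; rw [hE x]
      rw [this]; continuity
    exact this.continuousOn
  · intro x hx
    rw [interior_Icc] at hx
    rw [(key x hx).deriv]
    exact neg x hx
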